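/- Let r ≥ 1, n ≥ 1 and s = (s_1, …, s_n) ∈ ℝ_{>0}^n with s_i ≤ s_{i+1} for 1 ≤ i ≤ n−1. Then s'_i := ε̂^{r,i−1}_{(s_1,…,s_{i−1})}(s_i) > 0 for 1 ≤ i ≤ n, and for every x ∈ ℝ_{≥0} one has ε̂^{r,n}_s(x) = (ε̂^{r+n−1,1}_{s'_n} ∘ ⋯ ∘ ε̂^{r+1,1}_{s'_2} ∘ ε̂^{r,1}_{s'_1})(x). -/

import Mathlib

noncomputable section

open scoped BigOperators

open Classical in
/-- The absolute value `|y| = q^{deg y}` (and `|0| = 0`) on `A = F_q[T]`. -/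
def absA (Fq : Type) [Field Fq] [Fintype Fq] (y : Polynomial Fq) : ℝ :=
  if y = 0 then 0 else (Fintype.card Fq : ℝ) ^ y.natDegree

/-- `ε^{r,n}_s(x) = x + Σ_{y ∈ A^n, y ≠ 0} max(x − max_{1≤i≤n} |y_i|^r·s_i, 0)`.
(For each `x` only finitely many summands are nonzero, so the `tsum` agrees with the
intended sum; the inner `⨆` over the finite type `Fin n` is the maximum.) -/
def epsFun (Fq : Type) [Field Fq] [Fintype Fq] (r n : ℕ) (s : Fin n → ℝ) (x : ℝ) : ℝ :=
  x + ∑' y : {y : Fin n → Polynomial Fq // y ≠ 0},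
      max (x - ⨆ i : Fin n, (absA Fq (y.1 i)) ^ r * s i) 0

/-- `δ^{r,n}(s) = ((q−1)/(q^{r+n}−1))·Σ_{i=1}^n q^{n−i}·ε^{r,i−1}_{(s_1,…,s_{i−1})}(s_i)`. -/
def deltaFun (Fq : Type) [Field Fq] [Fintype Fq] (r n : ℕ) (s : Fin n → ℝ) : ℝ :=
  ((Fintype.card Fq : ℝ) - 1) / ((Fintype.card Fq : ℝ) ^ (r + n) - 1) *
    ∑ i : Fin n, (Fintype.card Fq : ℝ) ^ (n - 1 - (i : ℕ)) *
      epsFun Fq r i (fun j : Fin (i : ℕ) => s (Fin.castLE i.isLt.le j)) (s i)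

/-- `ε̂^{r,n}_s(x) = ε^{r,n}_s(x) − δ^{r,n}(s)`. -/
def epsHat (Fq : Type) [Field Fq] [Fintype Fq] (r n : ℕ) (s : Fin n → ℝ) (x : ℝ) : ℝ :=
  epsFun Fq r n s x - deltaFun Fq r n s

/-- `s'_{k+1} = ε̂^{r,k}_{(s_1,…,s_k)}(s_{k+1})` (0-indexed: the sequence of values appearing
in Statement 10), extended by `0` outside the range. -/
def primeSeq (Fq : Type) [Field Fq] [Fintype Fq] (r n : ℕ) (s : Fin n → ℝ) (k : ℕ) : ℝ :=
  if h : k < n then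
    epsHat Fq r k (fun j : Fin k => s ⟨j.1, j.2.trans h⟩) (s ⟨k, h⟩)
  else 0

/-- The iterated composite `ε̂^{r+k−1,1}_{s'(k-1)} ∘ ⋯ ∘ ε̂^{r,1}_{s'(0)}`. -/
def iterChain (Fq : Type) [Field Fq] [Fintype Fq] (r : ℕ) (s' : ℕ → ℝ) : ℕ → ℝ → ℝ
  | 0, x => x
  | (k + 1), x => epsHat Fq (r + k) 1 (fun _ => s' k) (iterChain Fq r s' k x)

lemma subtype_ne_zero_tsum {ι : Type*} [AddCommGroup ι] (f : ι → ℝ) (hf : Summable f) :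
    (∑' y : {y : ι // y ≠ 0}, f y.1) = (∑' y, f y) - f 0 := by
  have h1 : (∑' x : ({0}ᶜ : Set ι), f x.1) + (∑' x : ({0} : Set ι), f x.1) = ∑' y, f y := by
    rw [add_comm]
    exact hf.tsum_subtype_add_tsum_subtype_compl {0}
  have h2 : (∑' x : ({0} : Set ι), f x.1) = f 0 := tsum_singleton 0 f
  have h3 : (∑' y : {y : ι // y ≠ 0}, f y.1) = (∑' x : ({0}ᶜ : Set ι), f x.1) := by
    exact (Equiv.subtypeEquivRight (p := fun y : ι => y ≠ 0)
      (q := fun y : ι => y ∈ ({0}ᶜ : Set ι)) (by simp)).tsum_eq (fun x => f x.1)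
  rw [h3]
  linarith [h1, h2]

attribute [local instance] Classical.propDecidable

variable (Fq : Type) [Field Fq] [Fintype Fq]

local notation "q" => (Fintype.card Fq : ℝ)
local notation "Poly" => Polynomial Fq

lemma one_lt_q : (1:ℝ) < q := by exact_mod_cast Fintype.one_lt_card

lemma q_pos : (0:ℝ) < q := lt_trans one_pos (one_lt_q Fq)

lemma absA_nonneg (y : Poly) : 0 ≤ absA Fq y := by
  unfold absA; split
  · exact le_refl 0
  · positivity

lemma absA_zero : absA Fq 0 = 0 := by simp [absA]

lemma absA_of_ne {y : Poly} (h : y ≠ 0) : absA Fq y = q ^ y.natDegree := by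
  simp [absA, h]

lemma one_le_absA {y : Poly} (h : y ≠ 0) : 1 ≤ absA Fq y := by
  rw [absA_of_ne Fq h]
  exact one_le_pow₀ (le_of_lt (one_lt_q Fq))

/-- the inner sup -/
def Mf (r n : ℕ) (s : Fin n → ℝ) (y : Fin n → Poly) : ℝ :=
  ⨆ i : Fin n, (absA Fq (y i)) ^ r * s i

lemma Mf_nonneg {r n : ℕ} {s : Fin n → ℝ} (hs : ∀ i, 0 ≤ s i) (y : Fin n → Poly) :
    0 ≤ Mf Fq r n s y :=
  Real.iSup_nonneg fun i => mul_nonneg (pow_nonneg (absA_nonneg Fq _) _) (hs i)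

lemma Mf_zero {r n : ℕ} (hr : 1 ≤ r) (s : Fin n → ℝ) : Mf Fq r n s 0 = 0 := by
  unfold Mf
  have : ∀ i : Fin n, (absA Fq ((0 : Fin n → Poly) i)) ^ r * s i = 0 := by
    intro i
    simp [absA_zero, zero_pow (by omega : r ≠ 0)]
  rw [funext this]
  exact Real.iSup_const_zero

lemma le_Mf {r n : ℕ} (s : Fin n → ℝ) (y : Fin n → Poly) (i : Fin n) :
    (absA Fq (y i)) ^ r * s i ≤ Mf Fq r n s y := by
  unfold Mf
  exact le_ciSup (f := fun i => (absA Fq (y i)) ^ r * s i) (Finite.bddAbove_range _) i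

/-- Polynomials of bounded degree form a finite set. -/
lemma finite_natDegree_le (B : ℕ) : {p : Poly | p.natDegree ≤ B}.Finite := by
  have : Set.InjOn (fun p : Poly => fun i : Fin (B+1) => p.coeff i)
      {p : Poly | p.natDegree ≤ B} := by
    intro p hp p' hp' h
    simp only [Set.mem_setOf_eq] at hp hp'
    ext k
    by_cases hk : k ≤ B
    · exact congrFun h ⟨k, Nat.lt_succ_of_le hk⟩
    · rw [Polynomial.coeff_eq_zero_of_natDegree_lt (by omega : p.natDegree < k),
        Polynomial.coeff_eq_zero_of_natDegree_lt (by omega : p'.natDegree < k)]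
  exact Set.Finite.of_finite_image (Set.toFinite _) this

lemma finite_absA_lt {k : ℕ} (hk : 1 ≤ k) {σ x : ℝ} (hσ : 0 < σ) :
    {z : Poly | absA Fq z ^ k * σ < x}.Finite := by
  obtain ⟨B, hB⟩ := pow_unbounded_of_one_lt (x / σ) (one_lt_q Fq)
  apply (finite_natDegree_le Fq B).subset
  intro z hz
  simp only [Set.mem_setOf_eq] at hz ⊢
  by_cases h0 : z = 0
  · simp [h0]
  · rw [absA_of_ne Fq h0] at hz
    have h1 : (q ^ z.natDegree : ℝ) ≤ (q ^ z.natDegree) ^ k := by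
      apply le_self_pow₀ (one_le_pow₀ (le_of_lt (one_lt_q Fq))) (by omega)
    have h2 : (q ^ z.natDegree : ℝ) * σ < x :=
      lt_of_le_of_lt (mul_le_mul_of_nonneg_right h1 (le_of_lt hσ)) hz
    have h3 : (q ^ z.natDegree : ℝ) < q ^ B := lt_trans ((lt_div_iff₀ hσ).2 h2) hB
    exact le_of_lt ((pow_lt_pow_iff_right₀ (one_lt_q Fq)).1 h3)

lemma summable_term {r n : ℕ} (hr : 1 ≤ r) {s : Fin n → ℝ} (hs : ∀ i, 0 < s i) (x : ℝ) :
    Summable (fun y : Fin n → Poly => max (x - Mf Fq r n s y) 0) := by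
  have hfin : {y : Fin n → Poly | max (x - Mf Fq r n s y) 0 ≠ 0}.Finite := by
    apply Set.Finite.subset
      (Set.Finite.pi (t := fun i : Fin n => {p : Poly | absA Fq p ^ r * s i < x})
        (fun i => finite_absA_lt Fq hr (hs i)))
    intro y hy
    simp only [Set.mem_setOf_eq] at hy
    have hMx : Mf Fq r n s y < x := by
      by_contra hc
      exact hy (max_eq_right (by linarith [not_lt.1 hc]))
    intro i _
    exact lt_of_le_of_lt (le_Mf Fq s y i) hMx
  exact summable_of_ne_finset_zero (s := hfin.toFinset) (by
    intro y hy
    by_contra hne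
    exact hy (hfin.mem_toFinset.2 hne))

/-- full-index sum version -/
def Efull (r n : ℕ) (s : Fin n → ℝ) (x : ℝ) : ℝ :=
  ∑' y : Fin n → Poly, max (x - Mf Fq r n s y) 0

lemma epsFun_eq_Efull {r n : ℕ} (hr : 1 ≤ r) {s : Fin n → ℝ} (hs : ∀ i, 0 < s i)
    {x : ℝ} (hx : 0 ≤ x) :
    epsFun Fq r n s x = Efull Fq r n s x := by
  have hsum := summable_term Fq hr hs x
  have : epsFun Fq r n s x
      = x + ((∑' y : Fin n → Poly, max (x - Mf Fq r n s y) 0)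
          - max (x - Mf Fq r n s 0) 0) := by
    show x + (∑' y : {y : Fin n → Poly // y ≠ 0}, max (x - Mf Fq r n s y.1) 0) = _
    rw [subtype_ne_zero_tsum (f := fun y : Fin n → Poly => max (x - Mf Fq r n s y) 0) hsum]
  rw [this, Mf_zero Fq hr s, Efull]
  rw [max_eq_left (by linarith)]
  ring

lemma Efull_mono {r n : ℕ} (hr : 1 ≤ r) {s : Fin n → ℝ} (hs : ∀ i, 0 < s i) :
    Monotone (Efull Fq r n s) := by
  intro a b hab
  exact Summable.tsum_le_tsum (fun y => max_le_max (by linarith) le_rfl)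
    (summable_term Fq hr hs a) (summable_term Fq hr hs b)

lemma epsFun_mono {r n : ℕ} (hr : 1 ≤ r) {s : Fin n → ℝ} (hs : ∀ i, 0 < s i) :
    Monotone (epsFun Fq r n s) := by
  intro a b hab
  unfold epsFun
  have h := Summable.tsum_le_tsum
    (f := fun y : {y : Fin n → Poly // y ≠ 0} => max (a - Mf Fq r n s y.1) 0)
    (g := fun y : {y : Fin n → Poly // y ≠ 0} => max (b - Mf Fq r n s y.1) 0)
    (fun y => max_le_max (by linarith) le_rfl)
    ((summable_term Fq hr hs a).subtype _) ((summable_term Fq hr hs b).subtype _)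
  exact add_le_add hab h

lemma Efull_nonpos {r n : ℕ} (hr : 1 ≤ r) {s : Fin n → ℝ} (hs : ∀ i, 0 < s i)
    {x : ℝ} (hx : x ≤ 0) : Efull Fq r n s x = 0 := by
  unfold Efull
  have : ∀ y : Fin n → Poly, max (x - Mf Fq r n s y) 0 = 0 := fun y =>
    max_eq_right (by linarith [Mf_nonneg Fq (r := r) (fun i => le_of_lt (hs i)) y])
  simp only [this]
  exact tsum_zero

lemma epsFun_zeroDim (r : ℕ) {m : ℕ} (hm : m = 0) (s : Fin m → ℝ) (x : ℝ) :
    epsFun Fq r m s x = x := by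
  subst hm
  unfold epsFun
  have : IsEmpty {y : Fin 0 → Poly // y ≠ 0} :=
    ⟨fun ⟨y, hy⟩ => hy (funext fun i => i.elim0)⟩
  rw [tsum_empty, add_zero]

lemma deltaFun_oneDim (r : ℕ) (t : Fin 1 → ℝ) :
    deltaFun Fq r 1 t = (q - 1) / (q ^ (r + 1) - 1) * t 0 := by
  unfold deltaFun
  rw [Fin.sum_univ_one]
  rw [epsFun_zeroDim Fq r (by simp)]
  norm_num

lemma deltaFun_zeroDim (r : ℕ) (s : Fin 0 → ℝ) : deltaFun Fq r 0 s = 0 := by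
  unfold deltaFun
  simp

lemma epsHat_oneDim_pos {r : ℕ} (hr : 1 ≤ r) {t v : ℝ} (ht : 0 < t) (hv : t ≤ v) :
    0 < epsHat Fq r 1 (fun _ => t) v := by
  have hd : deltaFun Fq r 1 (fun _ => t) = (q - 1) / (q ^ (r + 1) - 1) * t :=
    deltaFun_oneDim Fq r _
  have h1 : (1:ℝ) < q := one_lt_q Fq
  have hq1 : (q:ℝ) < q ^ (r + 1) := by
    calc (q:ℝ) = q ^ 1 := (pow_one _).symm
    _ < q ^ (r + 1) := by
      apply pow_lt_pow_right₀ h1 (by omega)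
  have hdlt : deltaFun Fq r 1 (fun _ => t) < t := by
    rw [hd]
    rw [div_mul_eq_mul_div, div_lt_iff₀ (by linarith)]
    nlinarith
  have hfe : v ≤ epsFun Fq r 1 (fun _ => t) v := by
    have h0 : 0 ≤ ∑' y : {y : Fin 1 → Poly // y ≠ 0}, max (v - Mf Fq r 1 (fun _ => t) y.1) 0 :=
      tsum_nonneg (fun y => le_max_right _ _)
    show v ≤ v + ∑' y : {y : Fin 1 → Poly // y ≠ 0}, max (v - Mf Fq r 1 (fun _ => t) y.1) 0
    linarith
  unfold epsHat
  linarith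

lemma epsHat_mono {r n : ℕ} (hr : 1 ≤ r) {s : Fin n → ℝ} (hs : ∀ i, 0 < s i) :
    Monotone (epsHat Fq r n s) := by
  intro a b hab
  unfold epsHat
  have := epsFun_mono Fq hr hs hab
  linarith

open Polynomial in
def polyEquiv : Poly ≃ Fq × Poly where
  toFun z := (z.coeff 0, z.divX)
  invFun p := p.2 * X + C p.1
  left_inv z := Polynomial.divX_mul_X_add z
  right_inv p := by
    obtain ⟨a, w⟩ := p
    simp only [Prod.mk.injEq]
    constructor
    · rw [Polynomial.coeff_add, Polynomial.coeff_mul_X_zero, Polynomial.coeff_C]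
      simp
    · ext n
      rw [Polynomial.coeff_divX, Polynomial.coeff_add, Polynomial.coeff_mul_X,
        Polynomial.coeff_C]
      simp

open Polynomial in
lemma absA_wXa {w : Poly} (hw : w ≠ 0) (a : Fq) :
    absA Fq (w * X + C a) = q * absA Fq w := by
  have hne : w * X + C a ≠ 0 := by
    intro h
    have := congrArg Polynomial.divX h
    rw [Polynomial.divX_zero] at this
    apply hw
    rw [← this]
    ext n
    rw [Polynomial.coeff_divX, Polynomial.coeff_add, Polynomial.coeff_mul_X,
      Polynomial.coeff_C]
    simp
  rw [absA_of_ne Fq hne, absA_of_ne Fq hw, Polynomial.natDegree_add_C,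
    Polynomial.natDegree_mul_X hw]
  ring

open Polynomial in
lemma absA_C {a : Fq} (ha : a ≠ 0) : absA Fq (C a) = 1 := by
  rw [absA_of_ne Fq (by simpa using ha), Polynomial.natDegree_C, pow_zero]

/-- 1-dim full sum -/
def E1 (k : ℕ) (t x : ℝ) : ℝ := ∑' z : Poly, max (x - absA Fq z ^ k * t) 0

lemma summable_E1 {k : ℕ} (hk : 1 ≤ k) {t : ℝ} (ht : 0 < t) (x : ℝ) :
    Summable (fun z : Poly => max (x - absA Fq z ^ k * t) 0) := by
  have hfin := finite_absA_lt Fq hk (x := x) ht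
  apply summable_of_ne_finset_zero (s := hfin.toFinset)
  intro z hz
  rw [Set.Finite.mem_toFinset, Set.mem_setOf_eq, not_lt] at hz
  exact max_eq_right (by linarith)

lemma Efull_oneDim (k : ℕ) (t x : ℝ) :
    Efull Fq k 1 (fun _ => t) x = E1 Fq k t x := by
  unfold Efull E1
  rw [← (Equiv.funUnique (Fin 1) Poly).symm.tsum_eq
    (fun y => max (x - Mf Fq k 1 (fun _ => t) y) 0)]
  apply tsum_congr
  intro z
  congr 1
  unfold Mf
  rw [ciSup_unique]
  rfl

lemma E1_scale {k : ℕ} (hk : 1 ≤ k) {t u : ℝ} (ht : 0 < t) (hu : t ≤ u) :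
    E1 Fq k t (q ^ k * u) = q ^ (k + 1) * E1 Fq k t u - (q - 1) * t := by
  have hq := one_lt_q Fq
  have hu0 : 0 < u := lt_of_lt_of_le ht hu
  have hqk : (1:ℝ) ≤ q ^ k := one_le_pow₀ (le_of_lt hq)
  have hqk1 : (1:ℝ) < q ^ k := one_lt_pow₀ hq (by omega)
  have hqku : u < q ^ k * u := by nlinarith
  -- step 1: reindex by polyEquiv.symm
  have h1 : E1 Fq k t (q ^ k * u)
      = ∑' p : Fq × Poly, max (q ^ k * u - absA Fq ((polyEquiv Fq).symm p) ^ k * t) 0 := by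
    unfold E1
    exact ((polyEquiv Fq).symm.tsum_eq
      (fun z => max (q ^ k * u - absA Fq z ^ k * t) 0)).symm
  -- summability of the product function
  have hsum : Summable (fun p : Fq × Poly =>
      max (q ^ k * u - absA Fq ((polyEquiv Fq).symm p) ^ k * t) 0) :=
    ((polyEquiv Fq).symm.summable_iff
      (f := fun z => max (q ^ k * u - absA Fq z ^ k * t) 0) |>.2
      (summable_E1 Fq hk ht _))
  -- pointwise formula
  have hpt : ∀ a : Fq, ∀ w : Poly,
      max (q ^ k * u - absA Fq ((polyEquiv Fq).symm (a, w)) ^ k * t) 0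
      = (fun w => q ^ k * max (u - absA Fq w ^ k * t) 0) w
        + (if w = 0 then (if a = 0 then 0 else -t) else 0) := by
    intro a w
    show max (q ^ k * u - absA Fq (w * Polynomial.X + Polynomial.C a) ^ k * t) 0 = _
    by_cases hw : w = 0
    · subst hw
      simp only [if_pos rfl, zero_mul, zero_add, absA_zero,
        zero_pow (by omega : k ≠ 0), zero_mul, sub_zero]
      by_cases ha : a = 0
      · subst ha
        simp only [if_pos rfl, map_zero, absA_zero, zero_pow (by omega : k ≠ 0), zero_mul,
          sub_zero]
        rw [max_eq_left (by positivity), max_eq_left (by positivity)]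
        simp
      · rw [if_neg ha, absA_C Fq ha, one_pow, one_mul,
          max_eq_left (by nlinarith), max_eq_left (by positivity)]
        simp only [if_true]
        ring
    · have hmm := mul_max_of_nonneg (u - absA Fq w ^ k * t) 0
        (by positivity : (0:ℝ) ≤ q ^ k)
      rw [mul_zero] at hmm
      rw [if_neg hw, add_zero, absA_wXa Fq hw a, mul_pow,
        show (q:ℝ) ^ k * absA Fq w ^ k * t = q ^ k * (absA Fq w ^ k * t) by ring,
        ← mul_sub, ← hmm]
  -- split as product sum
  rw [h1, Summable.tsum_prod' hsum (fun a => (hsum.prod_factor a)), tsum_fintype]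
  have h2 : ∀ a : Fq, (∑' w : Poly,
      max (q ^ k * u - absA Fq ((polyEquiv Fq).symm (a, w)) ^ k * t) 0)
      = q ^ k * E1 Fq k t u + (if a = 0 then 0 else -t) := by
    intro a
    have hs1 : Summable (fun w : Poly => q ^ k * max (u - absA Fq w ^ k * t) 0) :=
      (summable_E1 Fq hk ht u).mul_left _
    have hs2 : Summable (fun w : Poly => if w = 0 then (if a = 0 then 0 else -t) else (0:ℝ)) :=
      summable_of_ne_finset_zero (s := {0}) (by intro b hb; simp at hb; simp [hb])
    calc (∑' w : Poly, max (q ^ k * u - absA Fq ((polyEquiv Fq).symm (a, w)) ^ k * t) 0)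
        = ∑' w : Poly, ((fun w => q ^ k * max (u - absA Fq w ^ k * t) 0) w
            + (if w = 0 then (if a = 0 then 0 else -t) else 0)) :=
          tsum_congr (fun w => hpt a w)
      _ = q ^ k * E1 Fq k t u + (if a = 0 then 0 else -t) := by
          rw [Summable.tsum_add hs1 hs2, tsum_mul_left, tsum_ite_eq]
          rfl
  rw [Finset.sum_congr rfl (fun a _ => h2 a)]
  have h3 : (∑ a : Fq, (q ^ k * E1 Fq k t u + (if a = 0 then (0:ℝ) else -t)))
      = q * (q ^ k * E1 Fq k t u) - (q - 1) * t := by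
    rw [Finset.sum_add_distrib, Finset.sum_const, Finset.card_univ, nsmul_eq_mul]
    have h4 : (∑ a : Fq, (if a = 0 then (0:ℝ) else -t))
        = ∑ a : Fq, ((-t) + (if a = 0 then t else 0)) :=
      Finset.sum_congr rfl (fun a _ => by by_cases ha : a = 0 <;> simp [ha])
    rw [h4, Finset.sum_add_distrib, Finset.sum_const, Finset.card_univ, nsmul_eq_mul,
      Finset.sum_ite_eq' Finset.univ (0 : Fq) (fun _ => t)]
    simp only [Finset.mem_univ, if_true]
    ring
  rw [h3]
  ring

lemma oneDim_scale {k : ℕ} (hk : 1 ≤ k) {t u : ℝ} (ht : 0 < t) (hu : t ≤ u) :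
    epsHat Fq k 1 (fun _ => t) (q ^ k * u) = q ^ (k + 1) * epsHat Fq k 1 (fun _ => t) u := by
  have hq := one_lt_q Fq
  have hu0 : 0 < u := lt_of_lt_of_le ht hu
  have hqk1 : (1:ℝ) < q ^ k := one_lt_pow₀ hq (by omega)
  have hQ : (1:ℝ) < q ^ (k + 1) := one_lt_pow₀ hq (by omega)
  have hst : ∀ i : Fin 1, 0 < (fun _ : Fin 1 => t) i := fun _ => ht
  unfold epsHat
  rw [epsFun_eq_Efull Fq hk hst (by positivity), epsFun_eq_Efull Fq hk hst (le_of_lt hu0),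
    Efull_oneDim, Efull_oneDim, E1_scale Fq hk ht hu, deltaFun_oneDim]
  have hc : (q - 1) / (q ^ (k + 1) - 1) * (q ^ (k + 1) - 1) = q - 1 :=
    div_mul_cancel₀ _ (by linarith)
  linear_combination t * hc

lemma iSup_fin_succ {m : ℕ} (f : Fin (m + 1) → ℝ) (hf : ∀ i, 0 ≤ f i) :
    (⨆ i, f i) = max (⨆ i : Fin m, f i.castSucc) (f (Fin.last m)) := by
  apply le_antisymm
  · apply Real.iSup_le _ (le_trans (hf (Fin.last m)) (le_max_right _ _))
    intro i
    induction i using Fin.lastCases with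
    | last => exact le_max_right _ _
    | cast j =>
      exact le_trans (le_ciSup (f := fun i : Fin m => f i.castSucc)
        (Finite.bddAbove_range _) j) (le_max_left _ _)
  · apply max_le
    · apply Real.iSup_le _ (Real.iSup_nonneg hf)
      intro j
      exact le_ciSup (Finite.bddAbove_range f) j.castSucc
    · exact le_ciSup (Finite.bddAbove_range f) (Fin.last m)

def snocEquiv (m : ℕ) : (Fin (m + 1) → Poly) ≃ Poly × (Fin m → Poly) where
  toFun y := (y (Fin.last m), fun i => y i.castSucc)
  invFun p := Fin.snoc p.2 p.1
  left_inv y := Fin.snoc_init_self y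
  right_inv p := by
    obtain ⟨z, w⟩ := p
    simp [Fin.snoc_last, Fin.snoc_castSucc]

lemma Mf_snoc {r m : ℕ} {s : Fin (m + 1) → ℝ} (hs : ∀ i, 0 < s i)
    (w : Fin m → Poly) (z : Poly) :
    Mf Fq r (m + 1) s (Fin.snoc w z)
      = max (Mf Fq r m (fun i => s i.castSucc) w) (absA Fq z ^ r * s (Fin.last m)) := by
  unfold Mf
  rw [iSup_fin_succ _ (fun i => mul_nonneg (pow_nonneg (absA_nonneg Fq _) _)
    (le_of_lt (hs i)))]
  simp only [Fin.snoc_castSucc, Fin.snoc_last]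

lemma max_sub_split (x M a : ℝ) :
    max (x - max M a) 0 = max (x - M) 0 - max (min x a - M) 0 := by
  simp only [max_def, min_def]
  split_ifs <;> linarith

def subNeZeroEquiv : {z : Poly // z ≠ 0} ≃ {y : Fin 1 → Poly // y ≠ 0} :=
  ((Equiv.funUnique (Fin 1) Poly).symm).subtypeEquiv (by
    intro z
    constructor
    · intro hz h0
      exact hz (congrFun h0 0)
    · intro h hz
      subst hz
      exact h rfl)

lemma epsFun_oneDim (k : ℕ) (t x : ℝ) :
    epsFun Fq k 1 (fun _ => t) x
      = x + ∑' z : {z : Poly // z ≠ 0}, max (x - absA Fq z.1 ^ k * t) 0 := by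
  unfold epsFun
  congr 1
  rw [← (subNeZeroEquiv Fq).tsum_eq (fun y : {y : Fin 1 → Poly // y ≠ 0} =>
    max (x - ⨆ i : Fin 1, (absA Fq (y.1 i)) ^ k * t) 0)]
  apply tsum_congr
  intro z
  congr 1
  rw [ciSup_unique]
  rfl

lemma Efull_succ {r m : ℕ} (hr : 1 ≤ r) {s : Fin (m + 1) → ℝ} (hs : ∀ i, 0 < s i)
    {x : ℝ} (hx : 0 ≤ x) :
    Efull Fq r (m + 1) s x
      = ∑' z : Poly, (Efull Fq r m (fun i => s i.castSucc) x
          - Efull Fq r m (fun i => s i.castSucc) (min x (absA Fq z ^ r * s (Fin.last m)))) := by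
  have hs' : ∀ i : Fin m, 0 < s i.castSucc := fun i => hs _
  have hsum : Summable (fun y : Fin (m+1) → Poly => max (x - Mf Fq r (m+1) s y) 0) :=
    summable_term Fq hr hs x
  have h1 : Efull Fq r (m+1) s x
      = ∑' p : Poly × (Fin m → Poly),
          max (x - Mf Fq r (m+1) s ((snocEquiv Fq m).symm p)) 0 := by
    unfold Efull
    exact ((snocEquiv Fq m).symm.tsum_eq
      (fun y => max (x - Mf Fq r (m+1) s y) 0)).symm
  have hsum2 : Summable (fun p : Poly × (Fin m → Poly) =>
      max (x - Mf Fq r (m+1) s ((snocEquiv Fq m).symm p)) 0) :=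
    ((snocEquiv Fq m).symm.summable_iff
      (f := fun y => max (x - Mf Fq r (m+1) s y) 0)).2 hsum
  rw [h1, Summable.tsum_prod' hsum2 (fun z => hsum2.prod_factor z)]
  apply tsum_congr
  intro z
  have hpt : ∀ w : Fin m → Poly,
      max (x - Mf Fq r (m+1) s ((snocEquiv Fq m).symm (z, w))) 0
      = max (x - Mf Fq r m (fun i => s i.castSucc) w) 0
        - max (min x (absA Fq z ^ r * s (Fin.last m)) - Mf Fq r m (fun i => s i.castSucc) w) 0 := by
    intro w
    have : (snocEquiv Fq m).symm (z, w) = Fin.snoc w z := rfl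
    rw [this, Mf_snoc Fq hs w z, max_sub_split]
  rw [tsum_congr hpt]
  rw [Summable.tsum_sub (summable_term Fq hr hs' x) (summable_term Fq hr hs' _)]
  rfl

lemma deltaSum_succ (r m : ℕ) (s : Fin (m + 1) → ℝ) :
    (∑ i : Fin (m + 1), q ^ (m + 1 - 1 - (i : ℕ)) *
        epsFun Fq r i (fun j : Fin (i : ℕ) => s (Fin.castLE i.isLt.le j)) (s i))
    = q * (∑ i : Fin m, q ^ (m - 1 - (i : ℕ)) *
        epsFun Fq r i
          (fun j : Fin (i : ℕ) => (fun i : Fin m => s i.castSucc) (Fin.castLE i.isLt.le j))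
          ((fun i : Fin m => s i.castSucc) i))
      + epsFun Fq r m (fun i => s i.castSucc) (s (Fin.last m)) := by
  rw [Fin.sum_univ_castSucc, Finset.mul_sum]
  congr 1
  · apply Finset.sum_congr rfl
    intro i _
    show q ^ (m + 1 - 1 - (i : ℕ)) *
        epsFun Fq r (i : ℕ) (fun j : Fin (i : ℕ) => s (Fin.castSucc (Fin.castLE i.isLt.le j)))
          (s i.castSucc)
      = q * (q ^ (m - 1 - (i : ℕ)) *
        epsFun Fq r (i : ℕ) (fun j : Fin (i : ℕ) => s (Fin.castSucc (Fin.castLE i.isLt.le j)))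
          (s i.castSucc))
    have hexp : m + 1 - 1 - (i : ℕ) = (m - 1 - (i : ℕ)) + 1 := by
      have := i.isLt; omega
    rw [hexp, pow_succ]
    ring
  · have e0 : m + 1 - 1 - ((Fin.last m : Fin (m + 1)) : ℕ) = 0 := by simp
    rw [e0, pow_zero, one_mul]
    rfl

lemma deltaFun_succ {r : ℕ} (hr : 1 ≤ r) (m : ℕ) (s : Fin (m + 1) → ℝ) :
    deltaFun Fq r (m + 1) s = deltaFun Fq r m (fun i => s i.castSucc)
      + (q - 1) / (q ^ (r + m + 1) - 1) *
        (epsFun Fq r m (fun i => s i.castSucc) (s (Fin.last m))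
          - deltaFun Fq r m (fun i => s i.castSucc)) := by
  have hq := one_lt_q Fq
  have hA : (1:ℝ) < q ^ (r + m) := one_lt_pow₀ hq (by omega)
  have hne : (q:ℝ) ^ (r + m) - 1 ≠ 0 := by linarith
  have hAq : (1:ℝ) < q ^ (r + m) * q := by nlinarith
  have hne2 : (q:ℝ) ^ (r + m) * q - 1 ≠ 0 := by linarith
  have hpow : (q:ℝ) ^ (r + (m + 1)) = q ^ (r + m) * q := by
    rw [show r + (m + 1) = (r + m) + 1 from rfl, pow_succ]
  have hpow2 : (q:ℝ) ^ (r + m + 1) = q ^ (r + m) * q := pow_succ _ _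
  unfold deltaFun
  rw [deltaSum_succ, hpow, hpow2]
  set D := ∑ i : Fin m, q ^ (m - 1 - (i : ℕ)) *
      epsFun Fq r i
        (fun j : Fin (i : ℕ) => (fun i : Fin m => s i.castSucc) (Fin.castLE i.isLt.le j))
        ((fun i : Fin m => s i.castSucc) i) with hD
  set P := epsFun Fq r m (fun i => s i.castSucc) (s (Fin.last m)) with hP
  generalize (q:ℝ) ^ (r + m) = A at hne hne2 ⊢
  have key : ∀ c e : ℝ, c * (A - 1) = q - 1 → e * (A * q - 1) = q - 1 →
      e * (q * D + P) = c * D + e * (P - c * D) := by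
    intro c e hc he
    have h1 : (e * q - c + e * c) * (A - 1) = 0 := by linear_combination he + (e - 1) * hc
    have h0 : e * q - c + e * c = 0 := (mul_eq_zero.1 h1).resolve_right hne
    linear_combination D * h0
  exact key _ _ (div_mul_cancel₀ _ hne) (div_mul_cancel₀ _ hne2)


lemma step {r m : ℕ} (hr : 1 ≤ r) {s : Fin (m + 1) → ℝ} (hs : ∀ i, 0 < s i)
    (hscale : ∀ u : ℝ, 0 < u → (∀ i : Fin m, s i.castSucc ≤ u) →
      epsHat Fq r m (fun i => s i.castSucc) (q ^ r * u)
        = q ^ (r + m) * epsHat Fq r m (fun i => s i.castSucc) u)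
    (hmax : ∀ i : Fin m, s i.castSucc ≤ s (Fin.last m))
    {x : ℝ} (hx : 0 ≤ x) :
    epsHat Fq r (m + 1) s x
      = epsHat Fq (r + m) 1
          (fun _ => epsHat Fq r m (fun i => s i.castSucc) (s (Fin.last m)))
          (epsHat Fq r m (fun i => s i.castSucc) x) := by
  have hq := one_lt_q Fq
  set st : Fin m → ℝ := fun i => s i.castSucc with hst
  have hs' : ∀ i, 0 < st i := fun i => hs _
  set σ : ℝ := s (Fin.last m) with hσdef
  have hσ : 0 < σ := hs _
  set E : ℝ → ℝ := Efull Fq r m st with hE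
  set δ' : ℝ := deltaFun Fq r m st with hδ'
  have hhat : ∀ u : ℝ, 0 ≤ u → epsHat Fq r m st u = E u - δ' := by
    intro u hu
    unfold epsHat
    rw [epsFun_eq_Efull Fq hr hs' hu]
  set t : ℝ := E σ - δ' with ht
  have htt : epsHat Fq r m st σ = t := hhat σ (le_of_lt hσ)
  have hqr1 : (1:ℝ) ≤ q ^ r := one_le_pow₀ (le_of_lt hq)
  -- iterated scaling
  have hsc : ∀ d : ℕ, E ((q ^ r) ^ d * σ) - δ' = (q ^ (r + m)) ^ d * t := by
    intro d
    induction d with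
    | zero => simp [ht]
    | succ d ih =>
      have hpos : 0 < (q ^ r) ^ d * σ := by positivity
      have hge : ∀ i : Fin m, st i ≤ (q ^ r) ^ d * σ := by
        intro i
        have h1 : (1:ℝ) ≤ (q ^ r) ^ d := one_le_pow₀ hqr1
        nlinarith [hmax i, hs' i]
      have h2 := hscale ((q ^ r) ^ d * σ) hpos hge
      rw [hhat _ (by positivity), hhat _ (le_of_lt hpos)] at h2
      calc E ((q ^ r) ^ (d + 1) * σ) - δ'
          = E (q ^ r * ((q ^ r) ^ d * σ)) - δ' := by ring_nf
        _ = q ^ (r + m) * (E ((q ^ r) ^ d * σ) - δ') := h2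
        _ = (q ^ (r + m)) ^ (d + 1) * t := by rw [ih]; ring
  -- per z identity
  have key : ∀ z : Poly, z ≠ 0 →
      E x - E (min x (absA Fq z ^ r * σ)) = max ((E x - δ') - absA Fq z ^ (r + m) * t) 0 := by
    intro z hz
    set d := z.natDegree with hd
    have haz : absA Fq z ^ r * σ = (q ^ r) ^ d * σ := by
      rw [absA_of_ne Fq hz, ← pow_mul, ← pow_mul, mul_comm d r]
    have habs : absA Fq z ^ (r + m) = (q ^ (r + m)) ^ d := by
      rw [absA_of_ne Fq hz, ← pow_mul, ← pow_mul, mul_comm d (r + m)]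
    have hEaz : E (absA Fq z ^ r * σ) - δ' = absA Fq z ^ (r + m) * t := by
      rw [haz, habs]; exact hsc d
    rcases le_total x (absA Fq z ^ r * σ) with hle | hle
    · rw [min_eq_left hle]
      have hmono := Efull_mono Fq hr hs' hle
      rw [max_eq_right (by rw [← hEaz]; linarith)]
      ring
    · rw [min_eq_right hle]
      have hmono := Efull_mono Fq hr hs' hle
      rw [max_eq_left (by rw [← hEaz]; linarith), ← hEaz]
      ring
  -- define G and its sum
  set G : Poly → ℝ := fun z => E x - E (min x (absA Fq z ^ r * σ)) with hG
  have hGsum : Summable G := by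
    apply summable_of_ne_finset_zero (s := (finite_absA_lt Fq hr (x := x) hσ).toFinset)
    intro z hzmem
    rw [Set.Finite.mem_toFinset, Set.mem_setOf_eq, not_lt] at hzmem
    show E x - E (min x (absA Fq z ^ r * σ)) = 0
    rw [min_eq_left hzmem]
    ring
  have hG0 : G 0 = E x := by
    show E x - E (min x (absA Fq 0 ^ r * σ)) = E x
    rw [absA_zero, zero_pow (by omega : r ≠ 0), zero_mul, min_eq_right hx, hE,
      Efull_nonpos Fq hr hs' le_rfl]
    ring
  have hsplit : (∑' z : Poly, G z) = (∑' z : {z : Poly // z ≠ 0}, G z.1) + E x := by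
    rw [subtype_ne_zero_tsum G hGsum, hG0]
    ring
  -- assemble
  have hLHS : epsHat Fq r (m + 1) s x
      = (∑' z : {z : Poly // z ≠ 0}, G z.1) + E x - deltaFun Fq r (m + 1) s := by
    unfold epsHat
    rw [epsFun_eq_Efull Fq hr hs hx, Efull_succ Fq hr hs hx, ← hG, hsplit]
  have hcong : (∑' z : {z : Poly // z ≠ 0}, G z.1)
      = ∑' z : {z : Poly // z ≠ 0}, max ((E x - δ') - absA Fq z.1 ^ (r + m) * t) 0 :=
    tsum_congr (fun z => key z.1 z.2)
  have hRHS : epsHat Fq (r + m) 1 (fun _ => epsHat Fq r m st σ) (epsHat Fq r m st x)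
      = (E x - δ') + (∑' z : {z : Poly // z ≠ 0}, max ((E x - δ') - absA Fq z.1 ^ (r + m) * t) 0)
        - (q - 1) / (q ^ (r + m + 1) - 1) * t := by
    rw [htt, hhat x hx]
    unfold epsHat
    rw [epsFun_oneDim, deltaFun_oneDim]
  rw [hLHS, hcong, hRHS, deltaFun_succ Fq hr m s]
  have hPt : epsFun Fq r m st σ - δ' = t := by
    rw [ht, hE, hδ', epsFun_eq_Efull Fq hr hs' (le_of_lt hσ)]
  rw [← hst, ← hσdef, ← hδ']
  rw [show epsFun Fq r m st σ - δ' = t from hPt]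
  ring

lemma iterChain_congr {r k : ℕ} {s1 s2 : ℕ → ℝ} (h : ∀ j, j < k → s1 j = s2 j) (x : ℝ) :
    iterChain Fq r s1 k x = iterChain Fq r s2 k x := by
  induction k with
  | zero => rfl
  | succ k ih =>
    show epsHat Fq (r + k) 1 (fun _ => s1 k) (iterChain Fq r s1 k x)
      = epsHat Fq (r + k) 1 (fun _ => s2 k) (iterChain Fq r s2 k x)
    rw [h k (Nat.lt_succ_self k), ih (fun j hj => h j (hj.trans (Nat.lt_succ_self k)))]

lemma iterChain_mono {r k : ℕ} (hr : 1 ≤ r) {s' : ℕ → ℝ} (hpos : ∀ j, j < k → 0 < s' j) :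
    Monotone (iterChain Fq r s' k) := by
  induction k with
  | zero => exact monotone_id
  | succ k ih =>
    have h1 : Monotone (epsHat Fq (r + k) 1 (fun _ => s' k)) :=
      epsHat_mono Fq (by omega) (fun _ => hpos k (Nat.lt_succ_self k))
    exact fun a b hab => h1 (ih (fun j hj => hpos j (hj.trans (Nat.lt_succ_self k))) hab)

lemma primeSeq_trunc {r n k : ℕ} (s : Fin n → ℝ) (s' : Fin k → ℝ) (hk : k ≤ n)
    (hss : ∀ j : Fin k, s' j = s ⟨j.1, lt_of_lt_of_le j.2 hk⟩) (j : ℕ) (hj : j < k) :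
    primeSeq Fq r k s' j = primeSeq Fq r n s j := by
  unfold primeSeq
  rw [dif_pos hj, dif_pos (lt_of_lt_of_le hj hk)]
  have h1 : (fun i : Fin j => s' ⟨i.1, i.2.trans hj⟩)
      = (fun i : Fin j => s ⟨i.1, lt_of_lt_of_le (i.2.trans hj) hk⟩) :=
    funext fun i => hss ⟨i.1, i.2.trans hj⟩
  rw [h1, hss ⟨j, hj⟩]

lemma main_induction : ∀ n : ℕ, 1 ≤ n → ∀ r : ℕ, 1 ≤ r → ∀ s : Fin n → ℝ,
    (∀ i, 0 < s i) → Monotone s →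
    ((∀ k : ℕ, k < n → 0 < primeSeq Fq r n s k) ∧
     ∀ x : ℝ, 0 ≤ x → epsHat Fq r n s x = iterChain Fq r (primeSeq Fq r n s) n x) := by
  intro n
  induction n using Nat.strong_induction_on with
  | _ n IH =>
  intro hn r hr s hs hmono
  obtain ⟨m, rfl⟩ : ∃ m, n = m + 1 := ⟨n - 1, by omega⟩
  rcases Nat.eq_zero_or_pos m with hm | hm
  · -- base case n = 1
    subst hm
    have hp0 : primeSeq Fq r 1 s 0 = s 0 := by
      unfold primeSeq
      rw [dif_pos (Nat.lt_succ_self 0)]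
      unfold epsHat
      rw [epsFun_zeroDim Fq r rfl, deltaFun_zeroDim, sub_zero]
      congr 1
    constructor
    · intro k hk
      have : k = 0 := by omega
      subst this
      rw [hp0]; exact hs 0
    · intro x hx
      show epsHat Fq r 1 s x
        = epsHat Fq (r + 0) 1 (fun _ => primeSeq Fq r 1 s 0) (iterChain Fq r _ 0 x)
      rw [hp0]
      show epsHat Fq r 1 s x = epsHat Fq r 1 (fun _ => s 0) x
      congr 1
      funext i
      congr 1
      exact Fin.ext (by omega)
  · -- inductive case, m ≥ 1
    set st : Fin m → ℝ := fun i => s i.castSucc with hstdef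
    have hs' : ∀ i, 0 < st i := fun i => hs _
    have hmono' : Monotone st := fun a b hab => hmono (by
      simpa using Fin.castSucc_le_castSucc_iff.2 hab)
    set σ : ℝ := s (Fin.last m) with hσdef
    have hσ : 0 < σ := hs _
    have hmax : ∀ i : Fin m, st i ≤ σ := fun i => hmono (Fin.le_last _)
    obtain ⟨posm, compm⟩ := IH m (Nat.lt_succ_self m) hm r hr st hs' hmono'
    set psm : ℕ → ℝ := primeSeq Fq r m st with hpsm
    -- truncation of primeSeq
    have hps : ∀ k, k < m → primeSeq Fq r (m + 1) s k = psm k := by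
      intro k hk
      rw [hpsm]
      exact (primeSeq_trunc Fq s st (Nat.le_succ m) (fun j => rfl) k hk).symm
    -- psm k as a chain value, for 1 ≤ k < m
    have hpsm_chain : ∀ k, k < m → ∀ hk : k < m, psm k = iterChain Fq r psm k (st ⟨k, hk⟩) := by
      intro k hkm hk
      rcases Nat.eq_zero_or_pos k with hk0 | hk1
      · subst hk0
        show psm 0 = st ⟨0, hk⟩
        rw [hpsm]
        unfold primeSeq
        rw [dif_pos hk]
        unfold epsHat
        rw [epsFun_zeroDim Fq r rfl, deltaFun_zeroDim, sub_zero]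
      · set s'' : Fin k → ℝ := fun j : Fin k => st ⟨j.1, j.2.trans hk⟩ with hs''
        have hs''pos : ∀ j, 0 < s'' j := fun j => hs' _
        have hs''mono : Monotone s'' := fun a b hab => hmono' (Fin.mk_le_mk.2 hab)
        obtain ⟨_, compk⟩ := IH k (by omega) hk1 r hr s'' hs''pos hs''mono
        have h1 : psm k = epsHat Fq r k s'' (st ⟨k, hk⟩) := by
          rw [hpsm]
          unfold primeSeq
          rw [dif_pos hk]
        rw [h1, compk (st ⟨k, hk⟩) (le_of_lt (hs' _))]
        exact iterChain_congr Fq (fun j hj =>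
          primeSeq_trunc Fq st s'' (le_of_lt hk) (fun i => rfl) j hj) _
    -- key comparison
    have hkey : ∀ k, k < m → ∀ u : ℝ, (∀ i : Fin m, st i ≤ u) →
        psm k ≤ iterChain Fq r psm k u := by
      intro k hk u hu
      rcases Nat.eq_zero_or_pos k with hk0 | hk1
      · subst hk0
        have : psm 0 = st ⟨0, hk⟩ := by
          rw [hpsm]; unfold primeSeq; rw [dif_pos hk]; unfold epsHat
          rw [epsFun_zeroDim Fq r rfl, deltaFun_zeroDim, sub_zero]
        rw [this]
        exact hu _
      · rw [hpsm_chain k hk hk]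
        exact iterChain_mono Fq hr (fun j hj => posm j (hj.trans hk)) (hu ⟨k, hk⟩)
    -- chain scaling
    have hchain_scale : ∀ u : ℝ, 0 < u → (∀ i : Fin m, st i ≤ u) →
        ∀ k, k ≤ m → iterChain Fq r psm k (q ^ r * u) = q ^ (r + k) * iterChain Fq r psm k u := by
      intro u hu0 hu k
      induction k with
      | zero =>
        intro _
        show q ^ r * u = q ^ (r + 0) * u
        norm_num
      | succ k ihk =>
        intro hk1
        have hk : k < m := by omega
        show epsHat Fq (r + k) 1 (fun _ => psm k) (iterChain Fq r psm k (q ^ r * u))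
          = q ^ (r + (k + 1)) * epsHat Fq (r + k) 1 (fun _ => psm k) (iterChain Fq r psm k u)
        rw [ihk (by omega)]
        have := oneDim_scale Fq (k := r + k) (by omega) (posm k hk)
          (hkey k hk u hu)
        rw [this, Nat.add_assoc]
    -- scaling hypothesis for step
    have hscale : ∀ u : ℝ, 0 < u → (∀ i : Fin m, s i.castSucc ≤ u) →
        epsHat Fq r m st (q ^ r * u) = q ^ (r + m) * epsHat Fq r m st u := by
      intro u hu0 hu
      rw [compm _ (by positivity), compm _ (le_of_lt hu0)]
      exact hchain_scale u hu0 hu m le_rfl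
    -- the last primeSeq value
    have hlast : primeSeq Fq r (m + 1) s m = epsHat Fq r m st σ := by
      unfold primeSeq
      rw [dif_pos (Nat.lt_succ_self m)]
      rfl
    have hlast_chain : epsHat Fq r m st σ = iterChain Fq r psm m σ :=
      compm σ (le_of_lt hσ)
    -- positivity of the chain at σ
    have hchain_pos : ∀ k, k ≤ m → 0 < iterChain Fq r psm k σ := by
      intro k
      induction k with
      | zero => intro _; exact hσ
      | succ k ihk =>
        intro hk1
        have hk : k < m := by omega
        show 0 < epsHat Fq (r + k) 1 (fun _ => psm k) (iterChain Fq r psm k σ)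
        exact epsHat_oneDim_pos Fq (by omega) (posm k hk) (hkey k hk σ hmax)
    constructor
    · intro k hk
      rcases Nat.lt_or_ge k m with hkm | hkm
      · rw [hps k hkm]
        exact posm k hkm
      · have hkm' : k = m := by omega
        rw [hkm', hlast, hlast_chain]
        exact hchain_pos m le_rfl
    · intro x hx
      have hstep := step Fq hr hs hscale hmax hx
      rw [hstep, compm x hx]
      show epsHat Fq (r + m) 1 (fun _ => epsHat Fq r m st σ) (iterChain Fq r psm m x)
        = epsHat Fq (r + m) 1 (fun _ => primeSeq Fq r (m + 1) s m)
            (iterChain Fq r (primeSeq Fq r (m + 1) s) m x)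
      rw [hlast]
      congr 1
      exact (iterChain_congr Fq (fun j hj => hps j hj) x).symm

/-- Let `r ≥ 1`, `n ≥ 1` and `s ∈ ℝ_{>0}^n` be nondecreasing.  Then
`s'_i := ε̂^{r,i−1}_{(s_1,…,s_{i−1})}(s_i) > 0` for `1 ≤ i ≤ n`, and for every `x ≥ 0` one
has `ε̂^{r,n}_s(x) = (ε̂^{r+n−1,1}_{s'_n} ∘ ⋯ ∘ ε̂^{r+1,1}_{s'_2} ∘ ε̂^{r,1}_{s'_1})(x)`. -/
theorem statement10 (Fq : Type) [Field Fq] [Fintype Fq]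
    (r n : ℕ) (hr : 1 ≤ r) (hn : 1 ≤ n) (s : Fin n → ℝ) (hs : ∀ i, 0 < s i)
    (hmono : Monotone s) :
    (∀ k : ℕ, k < n → 0 < primeSeq Fq r n s k) ∧
    ∀ x : ℝ, 0 ≤ x →
      epsHat Fq r n s x = iterChain Fq r (primeSeq Fq r n s) n x :=
  main_induction Fq n hn r hr s hs hmono
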